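/- Let (s₁, …, s_r) and (t₁, …, t_r) be r-tuples of positive integers with s₁ + ⋯ + s_r ≥ t₁ + ⋯ + t_r, and suppose there exists an index l with 0 ≤ l ≤ r−1 such that s_i ≤ t_i for all 1 ≤ i ≤ l and s_i ≥ t_i for all l+1 ≤ i ≤ r. Then for every positive integer n, H_n(s₁, …, s_r) ≤ H_n(t₁, …, t_r). -/

import Mathlib

/-- The multiple harmonic sum
`H_n(s₁, …, s_r) = ∑_{1 ≤ k₁ < ⋯ < k_r ≤ n} 1/(k₁^{s₁} ⋯ k_r^{s_r})`. -/
def mhs (n r : ℕ) (s : Fin r → ℕ) : ℚ :=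
  ∑ k ∈ Finset.univ.filter (fun k : Fin r → Fin n => ∀ i j : Fin r, i < j → k i < k j),
    ∏ i, (1 : ℚ) / ((k i : ℕ) + 1 : ℚ) ^ s i

/-- If `s` and `t` are `r`-tuples of positive integers with `|s| ≥ |t|` and there is an
index `l` with `0 ≤ l ≤ r−1` such that `s_i ≤ t_i` for `i ≤ l` and `s_i ≥ t_i` for
`i > l`, then `H_n(s) ≤ H_n(t)` for every positive integer `n`. -/
theorem mhs_le_mhs (r : ℕ) (hr : 1 ≤ r) (s t : Fin r → ℕ)
    (hs : ∀ i, 0 < s i) (ht : ∀ i, 0 < t i)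
    (hw : ∑ i, t i ≤ ∑ i, s i)
    (l : ℕ) (hl : l < r)
    (h1 : ∀ i : Fin r, (i : ℕ) < l → s i ≤ t i)
    (h2 : ∀ i : Fin r, l ≤ (i : ℕ) → t i ≤ s i)
    (n : ℕ) (hn : 1 ≤ n) :
    mhs n r s ≤ mhs n r t := by
  unfold mhs
  apply Finset.sum_le_sum
  intro k hk
  simp only [Finset.mem_filter, Finset.mem_univ, true_and] at hk
  set a : Fin r → ℕ := fun i => (k i : ℕ) + 1 with ha
  set p : Fin r := ⟨l, hl⟩ with hp
  have hap : ∀ i : Fin r, (i : ℕ) < l → a i ≤ a p := by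
    intro i hi
    have : k i < k p := hk i p (by rw [Fin.lt_def]; exact hi)
    simp only [ha]
    omega
  have hpa : ∀ i : Fin r, l ≤ (i : ℕ) → a p ≤ a i := by
    intro i hi
    rcases eq_or_lt_of_le hi with h | h
    · have : p = i := Fin.ext h
      rw [this]
    · have : k p < k i := hk p i (by rw [Fin.lt_def]; exact h)
      simp only [ha]
      omega
  have hp1 : 1 ≤ a p := by simp [ha]
  set A : Finset (Fin r) := Finset.univ.filter (fun i => (i : ℕ) < l) with hA
  set B : Finset (Fin r) := Finset.univ.filter (fun i => ¬ (i : ℕ) < l) with hB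
  have hAs : ∀ i ∈ A, s i ≤ t i := by
    intro i hi; exact h1 i (by simpa [hA] using hi)
  have hBt : ∀ i ∈ B, t i ≤ s i := by
    intro i hi; exact h2 i (by simp only [hB, Finset.mem_filter] at hi; omega)
  -- sum inequality
  have esplit : ∀ f : Fin r → ℕ, ∑ i, f i = ∑ i ∈ A, f i + ∑ i ∈ B, f i := by
    intro f
    rw [hA, hB, Finset.sum_filter_add_sum_filter_not]
  have e1 : ∑ i ∈ A, t i = ∑ i ∈ A, s i + ∑ i ∈ A, (t i - s i) := by
    rw [← Finset.sum_add_distrib]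
    exact Finset.sum_congr rfl fun i hi => by have := hAs i hi; omega
  have e2 : ∑ i ∈ B, s i = ∑ i ∈ B, t i + ∑ i ∈ B, (s i - t i) := by
    rw [← Finset.sum_add_distrib]
    exact Finset.sum_congr rfl fun i hi => by have := hBt i hi; omega
  have hsum : ∑ i ∈ A, (t i - s i) ≤ ∑ i ∈ B, (s i - t i) := by
    have h3 := hw
    rw [esplit t, esplit s] at h3
    omega
  -- product inequalities in ℕ
  have hstepA : ∏ i ∈ A, a i ^ (t i - s i) ≤ a p ^ ∑ i ∈ A, (t i - s i) := by
    rw [← Finset.prod_pow_eq_pow_sum]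
    apply Finset.prod_le_prod'
    intro i hi
    exact Nat.pow_le_pow_left (hap i (by simpa [hA] using hi)) _
  have hstepB : a p ^ ∑ i ∈ B, (s i - t i) ≤ ∏ i ∈ B, a i ^ (s i - t i) := by
    rw [← Finset.prod_pow_eq_pow_sum]
    apply Finset.prod_le_prod'
    intro i hi
    exact Nat.pow_le_pow_left (hpa i (by simp only [hB, Finset.mem_filter] at hi; omega)) _
  have hmid : a p ^ ∑ i ∈ A, (t i - s i) ≤ a p ^ ∑ i ∈ B, (s i - t i) :=
    Nat.pow_le_pow_right hp1 hsum
  have hAB : ∏ i ∈ A, a i ^ (t i - s i) ≤ ∏ i ∈ B, a i ^ (s i - t i) :=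
    le_trans hstepA (le_trans hmid hstepB)
  -- key inequality in ℕ
  have key : ∏ i, a i ^ t i ≤ ∏ i, a i ^ s i := by
    have psplit : ∀ f : Fin r → ℕ, ∏ i, f i = (∏ i ∈ A, f i) * ∏ i ∈ B, f i := by
      intro f
      rw [hA, hB, Finset.prod_filter_mul_prod_filter_not]
    rw [psplit (fun i => a i ^ t i), psplit (fun i => a i ^ s i)]
    have eA : ∏ i ∈ A, a i ^ t i = (∏ i ∈ A, a i ^ s i) * ∏ i ∈ A, a i ^ (t i - s i) := by
      rw [← Finset.prod_mul_distrib]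
      exact Finset.prod_congr rfl fun i hi => by
        rw [← pow_add]; congr 1; have := hAs i hi; omega
    have eB : ∏ i ∈ B, a i ^ s i = (∏ i ∈ B, a i ^ t i) * ∏ i ∈ B, a i ^ (s i - t i) := by
      rw [← Finset.prod_mul_distrib]
      exact Finset.prod_congr rfl fun i hi => by
        rw [← pow_add]; congr 1; have := hBt i hi; omega
    rw [eA, eB]
    calc (∏ i ∈ A, a i ^ s i) * (∏ i ∈ A, a i ^ (t i - s i)) * ∏ i ∈ B, a i ^ t i
        ≤ (∏ i ∈ A, a i ^ s i) * (∏ i ∈ B, a i ^ (s i - t i)) * ∏ i ∈ B, a i ^ t i := by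
          exact Nat.mul_le_mul_right _ (Nat.mul_le_mul_left _ hAB)
      _ = (∏ i ∈ A, a i ^ s i) * ((∏ i ∈ B, a i ^ t i) * ∏ i ∈ B, a i ^ (s i - t i)) := by ring
  -- transfer to ℚ
  have hax : ∀ i : Fin r, ((k i : ℕ) + 1 : ℚ) = (a i : ℚ) := fun i => by simp [ha]
  have hq : (∏ i, (1 : ℚ) / ((k i : ℕ) + 1 : ℚ) ^ s i)
      = 1 / ∏ i, (a i : ℚ) ^ s i := by
    simp only [hax]
    rw [Finset.prod_div_distrib, Finset.prod_const_one]
  have hq' : (∏ i, (1 : ℚ) / ((k i : ℕ) + 1 : ℚ) ^ t i)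
      = 1 / ∏ i, (a i : ℚ) ^ t i := by
    simp only [hax]
    rw [Finset.prod_div_distrib, Finset.prod_const_one]
  rw [hq, hq']
  apply one_div_le_one_div_of_le
  · apply Finset.prod_pos
    intro i _
    apply pow_pos
    have : 0 < a i := by simp [ha]
    exact_mod_cast this
  · exact_mod_cast key
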